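/- For every a ∈ K = F_{2^τ}((π)) there exists h ∈ K such that the Artin–Schreier defect D(a) equals the principal fractional ideal generated by h² + h + a; i.e., the infimum defining D(a) is attained. -/

import Mathlib

noncomputable section

open PowerSeries

/-- coefficient of a square in char 2 -/
theorem coeff_sq_char_two {F : Type*} [CommRing F] [CharP F 2] (g : PowerSeries F) (n : ℕ) :
    PowerSeries.coeff n (g ^ 2) =
      if Even n then (PowerSeries.coeff (n / 2) g) ^ 2 else 0 := by
  classical
  rw [pow_two, PowerSeries.coeff_mul]
  by_cases hn : Even n
  · obtain ⟨m, hm⟩ := hn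
    subst hm
    rw [if_pos ⟨m, rfl⟩]
    have hmem : ((m, m) : ℕ × ℕ) ∈ Finset.HasAntidiagonal.antidiagonal (m + m) := by simp
    rw [← Finset.add_sum_erase _ _ hmem]
    have h0 : ∑ p ∈ (Finset.HasAntidiagonal.antidiagonal (m + m)).erase (m, m),
        (PowerSeries.coeff p.1 g) * (PowerSeries.coeff p.2 g) = 0 := by
      apply Finset.sum_involution (fun p _ => (p.2, p.1))
      · intro p _
        simp only
        rw [mul_comm]
        exact CharTwo.add_self_eq_zero _
      · intro p hp _
        intro hcontra
        have h1 : p.2 = p.1 := congrArg Prod.fst hcontra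
        have hps : p ∈ Finset.HasAntidiagonal.antidiagonal (m + m) := Finset.mem_of_mem_erase hp
        have : p.1 + p.2 = m + m := Finset.HasAntidiagonal.mem_antidiagonal.mp hps
        have hpm : p = (m, m) := by
          have : p.1 = m := by omega
          have h2 : p.2 = m := by omega
          exact Prod.ext this h2
        exact (Finset.ne_of_mem_erase hp) hpm
      · intro p hp
        have hps : p ∈ Finset.HasAntidiagonal.antidiagonal (m + m) := Finset.mem_of_mem_erase hp
        have hsum : p.1 + p.2 = m + m := Finset.HasAntidiagonal.mem_antidiagonal.mp hps
        apply Finset.mem_erase.mpr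
        constructor
        · intro hcontra
          apply Finset.ne_of_mem_erase hp
          have h1 : p.2 = m := congrArg Prod.fst hcontra
          have h2 : p.1 = m := by omega
          exact Prod.ext h2 h1
        · exact Finset.HasAntidiagonal.mem_antidiagonal.mpr (by omega)
      · intro p _; rfl
    rw [h0, add_zero, pow_two]
    have hdiv : (m + m) / 2 = m := by omega
    rw [hdiv]
  · rw [if_neg hn]
    apply Finset.sum_involution (fun p _ => (p.2, p.1))
    · intro p _
      simp only
      rw [mul_comm]
      exact CharTwo.add_self_eq_zero _
    · intro p hp _ hcontra
      have h1 : p.2 = p.1 := congrArg Prod.fst hcontra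
      have hsum : p.1 + p.2 = n := Finset.HasAntidiagonal.mem_antidiagonal.mp hp
      exact hn ⟨p.1, by omega⟩
    · intro p hp
      have hsum : p.1 + p.2 = n := Finset.HasAntidiagonal.mem_antidiagonal.mp hp
      exact Finset.HasAntidiagonal.mem_antidiagonal.mpr (by omega)
    · intro p _; rfl

/-- the recursively defined coefficients of a root of `g² + g = M` -/
def ascoeff {F : Type*} [CommRing F] (M : PowerSeries F) : ℕ → F
  | 0 => 0
  | (n + 1) =>
      PowerSeries.coeff (n + 1) M +
        (if Even (n + 1) then (ascoeff M ((n + 1) / 2)) ^ 2 else 0)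
  decreasing_by exact Nat.div_lt_self (Nat.succ_pos n) one_lt_two

/-- Artin–Schreier equations with r.h.s. in the maximal ideal are solvable in `F⟦X⟧`, char 2. -/
theorem AS_solve {F : Type*} [CommRing F] [CharP F 2] (M : PowerSeries F)
    (hM : PowerSeries.constantCoeff M = 0) :
    ∃ g : PowerSeries F, g ^ 2 + g = M := by
  classical
  refine ⟨PowerSeries.mk (ascoeff M), ?_⟩
  ext n
  rw [map_add, coeff_sq_char_two]
  simp only [PowerSeries.coeff_mk]
  cases n with
  | zero =>
      have h0 : ascoeff M 0 = 0 := by rw [ascoeff]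
      rw [← PowerSeries.coeff_zero_eq_constantCoeff_apply] at hM
      simp [h0, hM]
  | succ n =>
      have hstep : ascoeff M (n + 1) = PowerSeries.coeff (n + 1) M +
          (if Even (n + 1) then (ascoeff M ((n + 1) / 2)) ^ 2 else 0) := by rw [ascoeff]
      rw [hstep]
      by_cases h : Even (n + 1)
      · rw [if_pos h, add_comm (PowerSeries.coeff (n+1) M), ← add_assoc,
          CharTwo.add_self_eq_zero, zero_add]
      · rw [if_neg h, zero_add, add_zero]

/-- The finite field with `2 ^ τ` elements. -/
abbrev Fq (τ : ℕ) := GaloisField 2 τ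

/-- The field of formal Laurent series `K = F_{2^τ}((π))`. -/
abbrev Kk (τ : ℕ) := LaurentSeries (Fq τ)

/-- The ring of integers `O = F_{2^τ}[[π]]`. -/
abbrev Ok (τ : ℕ) := PowerSeries (Fq τ)

/-- The Artin–Schreier defect `D(a) = ⋂_{h ∈ K} (h² + h + a)`, an intersection of
principal fractional `O`-ideals (as `O`-submodules of `K`). -/
def ASdefect (τ : ℕ) (a : Kk τ) : Submodule (Ok τ) (Kk τ) :=
  ⨅ h : Kk τ, Submodule.span (Ok τ) {h ^ 2 + h + a}

/-- the infimum defining the Artin–Schreier defect is attained: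
for every `a ∈ K` there is `h ∈ K` with `D(a) = (h² + h + a)`. -/
theorem ASdefect_attained (τ : ℕ) (hτ : 0 < τ) (a : Kk τ) :
    ∃ h : Kk τ, ASdefect τ a = Submodule.span (Ok τ) {h ^ 2 + h + a} := by
  classical
  haveI : CharP (Kk τ) 2 := charP_of_injective_ringHom (algebraMap (Fq τ) (Kk τ)).injective 2
  -- if some value is zero we are done
  by_cases HA : ∃ h : Kk τ, h ^ 2 + h + a = 0
  · obtain ⟨h, hh⟩ := HA
    refine ⟨h, le_antisymm (iInf_le _ h) ?_⟩
    rw [hh, Submodule.span_zero_singleton]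
    exact bot_le
  push_neg at HA
  -- all orders are ≤ 0
  have Hord : ∀ h : Kk τ, (h ^ 2 + h + a).order ≤ 0 := by
    intro h
    by_contra hlt
    push_neg at hlt
    set x := h ^ 2 + h + a with hx
    have hx0 : x ≠ 0 := HA h
    set n : ℕ := x.order.toNat with hn
    have hncast : (n : ℤ) = x.order := Int.toNat_of_nonneg hlt.le
    have hM : ((PowerSeries.X ^ n * x.powerSeriesPart : PowerSeries (Fq τ)) : Kk τ) = x :=
      LaurentSeries.X_order_mul_powerSeriesPart hncast
    have hn1 : 1 ≤ n := by omega
    have hc : PowerSeries.constantCoeff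
        (PowerSeries.X ^ n * x.powerSeriesPart) = 0 := by
      rw [map_mul, map_pow, PowerSeries.constantCoeff_X, zero_pow (by omega), zero_mul]
    obtain ⟨g, hg⟩ := AS_solve _ hc
    apply HA (h + (g : Kk τ))
    have hgK : ((g : Kk τ)) ^ 2 + (g : Kk τ) = x := by
      rw [← hM, ← hg]
      push_cast
      ring
    have hsq : (h + (g : Kk τ)) ^ 2 = h ^ 2 + (g : Kk τ) ^ 2 := by
      have h2 : (2 : Kk τ) = 0 := by
        exact_mod_cast CharP.cast_eq_zero (Kk τ) 2
      rw [add_sq, h2, zero_mul, zero_mul, add_zero]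
    have : (h + (g : Kk τ)) ^ 2 + (h + (g : Kk τ)) + a = x + ((g : Kk τ) ^ 2 + (g : Kk τ)) := by
      rw [hsq, hx]; ring
    rw [this, hgK]
    exact CharTwo.add_self_eq_zero x
  -- the set of orders has a greatest element
  obtain ⟨N, ⟨h₀, hh₀⟩, hmax⟩ := Int.exists_greatest_of_bdd
    (P := fun z => ∃ h : Kk τ, (h ^ 2 + h + a).order = z)
    ⟨0, fun z hz => by obtain ⟨h, hh⟩ := hz; rw [← hh]; exact Hord h⟩
    ⟨(0 ^ 2 + 0 + a).order, 0, rfl⟩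
  refine ⟨h₀, le_antisymm (iInf_le _ h₀) (le_iInf fun h => ?_)⟩
  rw [Submodule.span_le, Set.singleton_subset_iff, SetLike.mem_coe,
    Submodule.mem_span_singleton]
  -- produce the power series multiplier
  set x₀ := h₀ ^ 2 + h₀ + a with hx₀
  set x := h ^ 2 + h + a with hxd
  have hx0 : x ≠ 0 := HA h
  have hx₀0 : x₀ ≠ 0 := HA h₀
  set c : Kk τ := x₀ * x⁻¹ with hc
  have hc0 : c ≠ 0 := mul_ne_zero hx₀0 (inv_ne_zero hx0)
  have hordinv : (x⁻¹ : Kk τ).order = -x.order := by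
    have h1 : (x * x⁻¹ : Kk τ) = 1 := mul_inv_cancel₀ hx0
    have := HahnSeries.order_mul hx0 (inv_ne_zero hx0)
    rw [h1] at this
    have h2 : (1 : Kk τ).order = 0 := HahnSeries.order_one
    omega
  have hordc : 0 ≤ c.order := by
    rw [hc, HahnSeries.order_mul hx₀0 (inv_ne_zero hx0), hordinv, hh₀]
    have := hmax x.order ⟨h, rfl⟩
    omega
  set n : ℕ := c.order.toNat with hn
  have hncast : (n : ℤ) = c.order := Int.toNat_of_nonneg hordc
  have hMc : ((PowerSeries.X ^ n * c.powerSeriesPart : PowerSeries (Fq τ)) : Kk τ) = c :=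
    LaurentSeries.X_order_mul_powerSeriesPart hncast
  refine ⟨PowerSeries.X ^ n * c.powerSeriesPart, ?_⟩
  rw [Algebra.smul_def, LaurentSeries.coe_algebraMap, hMc, hc, mul_assoc,
    inv_mul_cancel₀ hx0, mul_one]
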